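/- arXiv:1411.5061 — 6 statements merged into one kernel-verified Lean document; each statement's English description precedes it below -/
import Mathlib

section
/- Let a, b, c be positive reals with a ≠ b + c, b ≠ a + c, c ≠ a + b, and suppose b ≠ c. Define a' = |b² − c²|/a, b' = b, c' = c. Then (a', b', c') also satisfies one of the strict anti-triangle inequalities (a' > b' + c', or b' > a' + c', or c' > a' + b') if and only if (a, b, c) does. -/
/-- Lemma 5.4: the strict anti-triangle inequalities are preserved by the
simultaneous diagonal switch `(a,b,c) ↦ (|b²−c²|/a, b, c)`. -/
theorem stmt1 (a b c : ℝ) (ha : 0 < a) (hb : 0 < b) (hc : 0 < c)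
    (h1 : a ≠ b + c) (h2 : b ≠ a + c) (h3 : c ≠ a + b) (hbc : b ≠ c) :
    (b + c < |b ^ 2 - c ^ 2| / a ∨ |b ^ 2 - c ^ 2| / a + c < b ∨
      |b ^ 2 - c ^ 2| / a + b < c) ↔
    (b + c < a ∨ a + c < b ∨ a + b < c) := by
  set t := |b ^ 2 - c ^ 2| / a with htdef
  have ht : a * t = |b ^ 2 - c ^ 2| := by
    rw [htdef, mul_div_assoc']; exact mul_div_cancel_left₀ _ ha.ne'
  have ht0 : 0 ≤ t := div_nonneg (abs_nonneg _) ha.le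
  rcases lt_or_gt_of_ne hbc with hlt | hlt
  · -- b < c
    have habs : |b ^ 2 - c ^ 2| = (c - b) * (c + b) := by
      rw [abs_of_neg (by nlinarith)]; ring
    rw [habs] at ht
    constructor
    · rintro (h' | h' | h')
      · -- b + c < t : then c - b > a
        right; right
        nlinarith
      · -- t + c < b impossible since b < c
        exact absurd (lt_of_le_of_lt (le_add_of_nonneg_left ht0) h') (not_lt.2 hlt.le)
      ·
        left; nlinarith
    · rintro (h' | h' | h')
      ·
        right; right; nlinarith
      · -- b > a + c impossible since b < c
        exact absurd (lt_trans hlt (by linarith)) (lt_irrefl _)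
      · -- c > a + b : a < c - b, so t > c + b
        left; nlinarith
  · -- c < b
    have habs : |b ^ 2 - c ^ 2| = (b - c) * (b + c) := by
      rw [abs_of_pos (by nlinarith)]; ring
    rw [habs] at ht
    constructor
    · rintro (h' | h' | h')
      · right; left; nlinarith
      · left; nlinarith
      · exact absurd (lt_of_le_of_lt (le_add_of_nonneg_left ht0) h') (not_lt.2 hlt.le)
    · rintro (h' | h' | h')
      · right; left; nlinarith
      · left; nlinarith
      · exact absurd (lt_trans hlt (by linarith)) (lt_irrefl _)
end

section
/- Let a, b, c be positive reals. Then |a² + b² + c² − 2ab − 2ac|/(bc) ≤ 2 if and only if √a ≤ √b + √c, √b ≤ √a + √c, and √c ≤ √a + √b. -/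
lemma aux5 (x y z : ℝ) (hx : 0 < x) (hy : 0 < y) (hz : 0 < z) :
    |(x^2) ^ 2 + (y^2) ^ 2 + (z^2) ^ 2 - 2 * x^2 * y^2 - 2 * x^2 * z^2| / (y^2 * z^2) ≤ 2 ↔
      (x ≤ y + z ∧ y ≤ x + z ∧ z ≤ x + y) := by
  have hpos : 0 < y^2 * z^2 := by positivity
  rw [div_le_iff₀ hpos, abs_le]
  constructor
  · rintro ⟨h1, h2⟩
    refine ⟨?_, ?_, ?_⟩
    · by_contra hlt
      push_neg at hlt
      nlinarith [mul_pos (mul_pos (mul_pos (by linarith : (0:ℝ) < x + y + z)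
        (by linarith : (0:ℝ) < x - y - z)) (by linarith : (0:ℝ) < x - y + z))
        (by linarith : (0:ℝ) < x + y - z)]
    · by_contra hlt
      push_neg at hlt
      nlinarith [mul_pos (mul_pos (mul_pos (by linarith : (0:ℝ) < x + y + z)
        (by linarith : (0:ℝ) < y - x - z)) (by linarith : (0:ℝ) < y - x + z))
        (by linarith : (0:ℝ) < y + x - z)]
    · by_contra hlt
      push_neg at hlt
      nlinarith [mul_pos (mul_pos (mul_pos (by linarith : (0:ℝ) < x + y + z)
        (by linarith : (0:ℝ) < z - x - y)) (by linarith : (0:ℝ) < z - x + y))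
        (by linarith : (0:ℝ) < z + x - y)]
  · rintro ⟨h1, h2, h3⟩
    constructor
    · nlinarith [sq_nonneg (x^2 - y^2 - z^2)]
    · nlinarith [mul_nonneg (mul_nonneg (mul_nonneg
        (by linarith : (0:ℝ) ≤ x + y + z) (by linarith : (0:ℝ) ≤ y + z - x))
        (by linarith : (0:ℝ) ≤ x + z - y)) (by linarith : (0:ℝ) ≤ x + y - z)]

/-- Lemma 5.8(2), second part: `|a² + b² + c² − 2ab − 2ac|/(bc) ≤ 2` iff the square
roots of `a`, `b`, `c` satisfy the triangle inequalities. -/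
theorem stmt5 (a b c : ℝ) (ha : 0 < a) (hb : 0 < b) (hc : 0 < c) :
    |a ^ 2 + b ^ 2 + c ^ 2 - 2 * a * b - 2 * a * c| / (b * c) ≤ 2 ↔
      (Real.sqrt a ≤ Real.sqrt b + Real.sqrt c ∧
       Real.sqrt b ≤ Real.sqrt a + Real.sqrt c ∧
       Real.sqrt c ≤ Real.sqrt a + Real.sqrt b) := by
  have ha' : Real.sqrt a ^ 2 = a := Real.sq_sqrt ha.le
  have hb' : Real.sqrt b ^ 2 = b := Real.sq_sqrt hb.le
  have hc' : Real.sqrt c ^ 2 = c := Real.sq_sqrt hc.le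
  have := aux5 (Real.sqrt a) (Real.sqrt b) (Real.sqrt c)
    (Real.sqrt_pos.mpr ha) (Real.sqrt_pos.mpr hb) (Real.sqrt_pos.mpr hc)
  rw [ha', hb', hc'] at this
  exact this
end

section
/- Let a, b, c be positive reals with a + b + c = 1, √b > √a + √c, and a > c. Define k = √b − √a − √c and k' = √a' − √b' − √c' where (a', b', c') is the normalization of (ab, (a−c)², bc) (i.e. divided by ab + (a−c)² + bc). Then k'/k = √((a + c − 2√(ac))/(a + c − 4ac)) < 1. -/
/-- Case 2 of the Trace Reduction Algorithm (proof of Lemma 5.10): the ratio of the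
deficiencies before and after the normalized switch
`(a,b,c) ↦ (ab, (a−c)², bc)/D` equals `√((a+c−2√(ac))/(a+c−4ac)) < 1`. -/
theorem stmt8 (a b c : ℝ) (ha : 0 < a) (hb : 0 < b) (hc : 0 < c)
    (hsum : a + b + c = 1)
    (h : Real.sqrt a + Real.sqrt c < Real.sqrt b) (hac : c < a) :
    let D := a * b + (a - c) ^ 2 + b * c
    let k := Real.sqrt b - Real.sqrt a - Real.sqrt c
    let k' := Real.sqrt (a * b / D) - Real.sqrt ((a - c) ^ 2 / D) -
      Real.sqrt (b * c / D)
    k' / k = Real.sqrt ((a + c - 2 * Real.sqrt (a * c)) / (a + c - 4 * a * c)) ∧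
      k' / k < 1 := by
  intro D k k'
  set s := Real.sqrt a with hs
  set t := Real.sqrt c with ht
  set u := Real.sqrt b with hu
  have hs2 : s ^ 2 = a := Real.sq_sqrt ha.le
  have ht2 : t ^ 2 = c := Real.sq_sqrt hc.le
  have hu2 : u ^ 2 = b := Real.sq_sqrt hb.le
  have hs0 : 0 < s := Real.sqrt_pos.mpr ha
  have ht0 : 0 < t := Real.sqrt_pos.mpr hc
  have hu0 : 0 < u := Real.sqrt_pos.mpr hb
  have hst : t < s := Real.sqrt_lt_sqrt hc.le hac
  have hk : 0 < k := by simp only [k]; linarith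
  have hsu : s < u := by linarith
  have htu : t < u := by linarith
  have hab : a < b := by nlinarith
  have hcb : c < b := by nlinarith
  have ha2 : a < 1/2 := by linarith
  have hc2 : c < 1/2 := by linarith
  have hst2 : s * t < 1/2 := by nlinarith [mul_pos hs0 ht0]
  have hkey : (s - t) ^ 2 < a + c - 4 * a * c := by
    nlinarith [mul_pos (mul_pos hs0 ht0) (show (0:ℝ) < 1 - 2*(s*t) by linarith)]
  have hb' : b = 1 - a - c := by linarith
  have hDval : D = a + c - 4 * a * c := by simp only [D]; rw [hb']; ring
  have hD0 : 0 < D := by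
    rw [hDval]
    nlinarith [mul_pos ha (show (0:ℝ) < 1 - 2*c by linarith),
      mul_pos hc (show (0:ℝ) < 1 - 2*a by linarith)]
  set v := Real.sqrt D with hv
  have hv0 : 0 < v := Real.sqrt_pos.mpr hD0
  have hv2 : v ^ 2 = D := Real.sq_sqrt hD0.le
  have e1 : Real.sqrt (a * b / D) = s * u / v := by
    rw [Real.sqrt_div (by positivity), Real.sqrt_mul ha.le]
  have e2 : Real.sqrt ((a - c) ^ 2 / D) = (a - c) / v := by
    rw [Real.sqrt_div (by positivity), Real.sqrt_sq (by linarith)]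
  have e3 : Real.sqrt (b * c / D) = u * t / v := by
    rw [Real.sqrt_div (by positivity), Real.sqrt_mul hb.le]
  have hnum : s * u - (a - c) - u * t = (s - t) * (u - s - t) := by
    rw [← hs2, ← ht2]; ring
  have hkval : k = u - s - t := rfl
  have hk' : k' = (s - t) * k / v := by
    simp only [k', e1, e2, e3, hkval]
    field_simp
    linarith [hnum]
  have hratio : k' / k = (s - t) / v := by
    rw [hk']
    field_simp
  have hrhs : Real.sqrt ((a + c - 2 * Real.sqrt (a * c)) / (a + c - 4 * a * c))
      = (s - t) / v := by
    rw [Real.sqrt_mul ha.le, ← hDval]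
    have : a + c - 2 * (s * t) = (s - t) ^ 2 := by rw [← hs2, ← ht2]; ring
    rw [this, Real.sqrt_div (by positivity), Real.sqrt_sq (by linarith)]
  refine ⟨by rw [hratio, hrhs], ?_⟩
  rw [hratio, div_lt_one hv0]
  rw [hv, show s - t = Real.sqrt ((s - t)^2) from (Real.sqrt_sq (by linarith)).symm]
  apply Real.sqrt_lt_sqrt (by positivity)
  rw [hDval]
  exact hkey
end

section
/- For every real k with −2 < k < 2, the set E_k = {(b,c) ∈ ℝ² : b > 0, c > 0, (b + c − 1)² = (k + 2)bc} is invariant under the maps S_y(b,c) = ((1−c)²/b, c) and S_z(b,c) = (b, (1−b)²/c) (wherever these are defined, i.e. b ≠ 0, c ≠ 0). -/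
/-- Lemma 7.4 (first part): for `−2 < k < 2`, the conic `(b + c − 1)² = (k+2)bc` is
invariant under `S_y(b,c) = ((1−c)²/b, c)` and `S_z(b,c) = (b, (1−b)²/c)`
wherever these are defined. -/
theorem stmt12 (k b c : ℝ) (hk1 : -2 < k) (hk2 : k < 2)
    (hb : b ≠ 0) (hc : c ≠ 0)
    (h : (b + c - 1) ^ 2 = (k + 2) * b * c) :
    ((1 - c) ^ 2 / b + c - 1) ^ 2 = (k + 2) * ((1 - c) ^ 2 / b) * c ∧
    (b + (1 - b) ^ 2 / c - 1) ^ 2 = (k + 2) * b * ((1 - b) ^ 2 / c) := by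
  constructor
  · field_simp
    linear_combination (1 - c) ^ 2 * h
  · field_simp
    linear_combination (1 - b) ^ 2 * h
end

section
/- For every real k with −2 < k < 2, the quartic curve Q_k = {(b,c) ∈ ℝ²_{>0} : (b + c)²(b + c − 1)² = (k + 2)bc} is the image of the ellipse E_k = {(b,c) : (b + c − 1)² = (k + 2)bc} under the map S_x(b, c) = (b/(b+c)², c/(b+c)²). -/
/-- Lemma 7.5 (computation): for `−2 < k < 2`, the quartic curve `Q_k` is the image
of the ellipse `E_k` under the normalized switch
`S_x(b,c) = (b/(b+c)², c/(b+c)²)`. -/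
theorem stmt13 (k : ℝ) (hk1 : -2 < k) (hk2 : k < 2) :
    {p : ℝ × ℝ | 0 < p.1 ∧ 0 < p.2 ∧
        (p.1 + p.2) ^ 2 * (p.1 + p.2 - 1) ^ 2 = (k + 2) * p.1 * p.2} =
      (fun p : ℝ × ℝ => (p.1 / (p.1 + p.2) ^ 2, p.2 / (p.1 + p.2) ^ 2)) ''
        {p : ℝ × ℝ | 0 < p.1 ∧ 0 < p.2 ∧
          (p.1 + p.2 - 1) ^ 2 = (k + 2) * p.1 * p.2} := by
  ext ⟨b, c⟩
  simp only [Set.mem_setOf_eq, Set.mem_image, Prod.mk.injEq, Prod.exists]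
  constructor
  · rintro ⟨hb, hc, heq⟩
    have hs : (0:ℝ) < b + c := by linarith
    have hs' : b + c ≠ 0 := ne_of_gt hs
    refine ⟨b / (b + c) ^ 2, c / (b + c) ^ 2, ⟨by positivity, by positivity, ?_⟩, ?_, ?_⟩
    · field_simp
      nlinarith [sq_nonneg (b + c), heq]
    · field_simp
    · field_simp
  · rintro ⟨B, C, ⟨hB, hC, hE⟩, hb, hc⟩
    have hs : (0:ℝ) < B + C := by linarith
    have hs' : B + C ≠ 0 := ne_of_gt hs
    subst hb hc
    refine ⟨by positivity, by positivity, ?_⟩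
    field_simp
    nlinarith [hE, sq_nonneg (B + C)]
end

section
/- For every real k, the ellipse E_{X,k} = {(b,c) ∈ ℝ² : b² + c² − 1 = kbc} is invariant under the map T(b,c) = ((c² − 1)/b, (((c² − 1)/b)² − 1)/c) wherever defined (b ≠ 0, c ≠ 0). -/
/-- Lemma 7.8: the ellipse `b² + c² − 1 = kbc` is invariant under the Dehn twist map
`T(b,c) = ((c²−1)/b, (((c²−1)/b)² − 1)/c)` wherever defined. -/
theorem stmt14 (k b c : ℝ) (hb : b ≠ 0) (hc : c ≠ 0)
    (h : b ^ 2 + c ^ 2 - 1 = k * b * c) :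
    ((c ^ 2 - 1) / b) ^ 2 + ((((c ^ 2 - 1) / b) ^ 2 - 1) / c) ^ 2 - 1 =
      k * ((c ^ 2 - 1) / b) * ((((c ^ 2 - 1) / b) ^ 2 - 1) / c) := by
  have hk : k = (b ^ 2 + c ^ 2 - 1) / (b * c) := by
    field_simp
    linarith
  subst hk
  field_simp
  ring_nf
end
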